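/- For the grid-forming SVG system dx/dt = J∇H(x) + Bd + C(x)u with H(x) = (L/2)(x₁²+x₂²) + (C/2)(x₃²+x₄²) + x₅, where J is the given skew-symmetric matrix, B = (1/C)[0,0;0,0;1,0;0,1;0,0], and C(x) = [1/L,0;0,1/L;0,0;0,0;-x₁,-x₂], the time derivative of H along any solution satisfies dH/dt = -x₃·i_g^d - x₄·i_g^q; in particular the energy change depends only on the disturbance input and not on the control input. -/

import Mathlib

/-- Along any solution of the grid-forming SVG system, the energy
`H(x) = (L/2)(x₁²+x₂²) + (C/2)(x₃²+x₄²) + x₅` satisfies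
`dH/dt = -x₃ i_g^d - x₄ i_g^q`, independently of the control input. -/
theorem svg_energy_derivative
    (L C ω : ℝ) (hL : 0 < L) (hC : 0 < C) (hω : 0 < ω)
    (x : ℝ → Fin 5 → ℝ) (u d : ℝ → Fin 2 → ℝ) (t : ℝ)
    (h1 : HasDerivAt (fun s => x s 0) (ω * x t 1 - x t 2 / L + u t 0 / L) t)
    (h2 : HasDerivAt (fun s => x s 1) (-ω * x t 0 - x t 3 / L + u t 1 / L) t)
    (h3 : HasDerivAt (fun s => x s 2) (x t 0 / C + ω * x t 3 - d t 0 / C) t)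
    (h4 : HasDerivAt (fun s => x s 3) (x t 1 / C - ω * x t 2 - d t 1 / C) t)
    (h5 : HasDerivAt (fun s => x s 4) (-(x t 0) * u t 0 - x t 1 * u t 1) t) :
    HasDerivAt
      (fun s => L / 2 * ((x s 0) ^ 2 + (x s 1) ^ 2)
        + C / 2 * ((x s 2) ^ 2 + (x s 3) ^ 2) + x s 4)
      (-(x t 2) * d t 0 - x t 3 * d t 1) t := by
  have h := (((((h1.pow 2).add (h2.pow 2)).const_mul (L / 2)).add
      (((h3.pow 2).add (h4.pow 2)).const_mul (C / 2))).add h5)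
  convert h using 1
  · rfl
  · rfl
  · rfl
  field_simp
  ring
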